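/- arXiv:2103.07344 — 6 statements merged into one kernel-verified Lean document; each statement's English description precedes it below -/
import Mathlib

section
/- Every subset S of the Boolean cube {0,1}⁴ with exactly 6 elements contains a pair of 4-antipodes (two elements at Hamming distance 4), or two distinct unordered pairs of 3-antipodes (two distinct unordered pairs {v,w} and {v′,w′} of elements of S, each pair at Hamming distance 3). -/
def hammingDist4 (v w : Fin 4 → Bool) : ℕ :=
  (Finset.univ.filter fun i => v i ≠ w i).card

def dec' (n : ℕ) : Fin 4 → Bool := fun i => n.testBit i.val

def enc (v : Fin 4 → Bool) : Fin 16 :=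
  ⟨(v 0).toNat + 2 * (v 1).toNat + 4 * (v 2).toNat + 8 * (v 3).toNat, by
    have h0 := Bool.toNat_le (v 0); have h1 := Bool.toNat_le (v 1)
    have h2 := Bool.toNat_le (v 2); have h3 := Bool.toNat_le (v 3)
    omega⟩

def hw4 (m : ℕ) : ℕ := m % 2 + m / 2 % 2 + m / 4 % 2 + m / 8 % 2

lemma dec_enc : ∀ v : Fin 4 → Bool, dec' (enc v).val = v := by decide

def P6 (a b c d e f : ℕ) : Prop :=
  ((([a,b,c,d,e,f]).any fun x => ([a,b,c,d,e,f]).any fun y => hw4 (x ^^^ y) == 4) = true) ∨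
  2 ≤ (([a,b,c,d,e,f].product [a,b,c,d,e,f]).countP
        fun p => decide (p.1 < p.2) && (hw4 (p.1 ^^^ p.2) == 3))

instance (a b c d e f : ℕ) : Decidable (P6 a b c d e f) := by unfold P6; infer_instance

set_option maxRecDepth 100000 in
set_option maxHeartbeats 10000000 in
lemma key2 : ∀ a < 16, ∀ b < a, ∀ c < b, ∀ d < c, ∀ e < d, ∀ f < e, P6 a b c d e f := by
  decide

lemma hd_hw : ∀ x < 16, ∀ y < 16, hammingDist4 (dec' x) (dec' y) = hw4 (x ^^^ y) := by decide

lemma dec_inj : ∀ x < 16, ∀ y < 16, dec' x = dec' y → x = y := by decide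

/-- Any set of 6 elements of the Boolean cube `{0,1}⁴` contains a pair of
4-antipodes, or two distinct unordered pairs of 3-antipodes. -/
theorem boolean_cube_six_points_antipodes (S : Finset (Fin 4 → Bool))
    (hS : S.card = 6) :
    (∃ v ∈ S, ∃ w ∈ S, hammingDist4 v w = 4) ∨
    (∃ v ∈ S, ∃ w ∈ S, ∃ v' ∈ S, ∃ w' ∈ S,
      hammingDist4 v w = 3 ∧ hammingDist4 v' w' = 3 ∧
      ({v, w} : Finset (Fin 4 → Bool)) ≠ {v', w'}) := by
  have enc_inj : Function.Injective enc := fun v w h => by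
    rw [← dec_enc v, h, dec_enc]
  set T : Finset (Fin 16) := S.image enc with hT
  have hTcard : T.card = 6 := by rw [hT, Finset.card_image_of_injective S enc_inj, hS]
  have memS : ∀ u ∈ T, dec' u.val ∈ S := by
    intro u hu
    obtain ⟨v, hv, rfl⟩ := Finset.mem_image.mp hu
    rwa [dec_enc]
  -- sort T
  set l := T.sort (· ≤ ·) with hl
  have hlen : l.length = 6 := by rw [hl, Finset.length_sort, hTcard]
  have hsort : l.Pairwise (· < ·) := (Finset.sortedLT_sort T).pairwise
  have hmem : ∀ x ∈ l, x ∈ T := fun x hx => (Finset.mem_sort _).mp hx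
  clear_value l
  obtain ⟨a, b, c, d, e, f, rfl⟩ : ∃ a b c d e f, l = [a, b, c, d, e, f] := by
    rcases l with _|⟨a,_|⟨b,_|⟨c,_|⟨d,_|⟨e,_|⟨f,_|⟨g,l⟩⟩⟩⟩⟩⟩⟩ <;>
      first
        | exact ⟨_, _, _, _, _, _, rfl⟩
        | (simp at hlen)
  simp only [List.pairwise_cons] at hsort
  obtain ⟨h1, h2, h3, h4, h5, -⟩ := hsort
  have hab : a < b := h1 b (by simp)
  have hbc : b < c := h2 c (by simp)
  have hcd : c < d := h3 d (by simp)
  have hde : d < e := h4 e (by simp)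
  have hef : e < f := h5 f (by simp)
  have hP := key2 f.val f.isLt e.val hef d.val hde c.val hcd b.val hbc a.val hab
  have hmemS : ∀ x ∈ [f.val, e.val, d.val, c.val, b.val, a.val], dec' x ∈ S := by
    intro x hx
    simp only [List.mem_cons, List.not_mem_nil, or_false] at hx
    rcases hx with rfl|rfl|rfl|rfl|rfl|rfl <;>
      exact memS _ (hmem _ (by simp))
  have h16 : ∀ x ∈ [f.val, e.val, d.val, c.val, b.val, a.val], x < 16 := by
    intro x hx
    simp only [List.mem_cons, List.not_mem_nil, or_false] at hx
    rcases hx with rfl|rfl|rfl|rfl|rfl|rfl <;> exact Fin.isLt _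
  rcases hP with h4 | h3
  · -- distance-4 pair
    left
    simp only [List.any_eq_true, beq_iff_eq] at h4
    obtain ⟨x, hx, y, hy, hxy⟩ := h4
    exact ⟨dec' x, hmemS x hx, dec' y, hmemS y hy, by
      rw [hd_hw x (h16 x hx) y (h16 y hy)]; exact hxy⟩
  · right
    rw [List.countP_eq_length_filter] at h3
    have hab' : a.val < b.val := hab
    have hbc' : b.val < c.val := hbc
    have hcd' : c.val < d.val := hcd
    have hde' : d.val < e.val := hde
    have hef' : e.val < f.val := hef
    have hnodupL : ([f.val, e.val, d.val, c.val, b.val, a.val] : List ℕ).Nodup := by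
      have h6 : ([a, b, c, d, e, f] : List (Fin 16)).Nodup := by
        rw [hl]; exact T.sort_nodup _
      have h7 := h6.map Fin.val_injective
      have h8 : ([f.val, e.val, d.val, c.val, b.val, a.val] : List ℕ) =
          (([a, b, c, d, e, f] : List (Fin 16)).map Fin.val).reverse := by simp
      rw [h8]
      exact List.nodup_reverse.mpr h7
    set F := (([f.val, e.val, d.val, c.val, b.val, a.val].product
        [f.val, e.val, d.val, c.val, b.val, a.val]).filter
        fun p => decide (p.1 < p.2) && (hw4 (p.1 ^^^ p.2) == 3)) with hFdef
    have hnodupF : F.Nodup := (hnodupL.product hnodupL).filter _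
    have hmemF : ∀ p ∈ F, (p.1 ∈ [f.val, e.val, d.val, c.val, b.val, a.val] ∧
        p.2 ∈ [f.val, e.val, d.val, c.val, b.val, a.val]) ∧
        p.1 < p.2 ∧ hw4 (p.1 ^^^ p.2) = 3 := by
      intro p hp
      rw [hFdef, List.mem_filter] at hp
      obtain ⟨hp1, hp2⟩ := hp
      simp only [Bool.and_eq_true, decide_eq_true_eq, beq_iff_eq] at hp2
      obtain ⟨x, y⟩ := p
      rw [List.pair_mem_product] at hp1
      exact ⟨hp1, hp2⟩
    clear_value F
    rcases F with _|⟨p, F⟩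
    · simp at h3
    rcases F with _|⟨q, F⟩
    · simp at h3
    have hpq : p ≠ q := by
      have := List.nodup_cons.mp hnodupF
      simp only [List.mem_cons] at this
      exact fun h => this.1 (Or.inl h)
    have hpF := hmemF p (by simp)
    have hqF := hmemF q (by simp)
    obtain ⟨x, y⟩ := p
    obtain ⟨x', y'⟩ := q
    obtain ⟨⟨hx, hy⟩, hxy, hd3⟩ := hpF
    obtain ⟨⟨hx', hy'⟩, hxy', hd3'⟩ := hqF
    refine ⟨dec' x, hmemS x hx, dec' y, hmemS y hy, dec' x', hmemS x' hx',
      dec' y', hmemS y' hy', ?_, ?_, ?_⟩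
    · rw [hd_hw x (h16 x hx) y (h16 y hy)]; exact hd3
    · rw [hd_hw x' (h16 x' hx') y' (h16 y' hy')]; exact hd3'
    · intro hEq
      have e1 : x = x' ∨ x = y' := by
        have hm : dec' x ∈ ({dec' x', dec' y'} : Finset (Fin 4 → Bool)) :=
          hEq ▸ Finset.mem_insert_self _ _
        rcases Finset.mem_insert.mp hm with h | h
        · exact Or.inl (dec_inj x (h16 x hx) x' (h16 x' hx') h)
        · exact Or.inr (dec_inj x (h16 x hx) y' (h16 y' hy')
            (Finset.mem_singleton.mp h))
      have e2 : y = x' ∨ y = y' := by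
        have hm : dec' y ∈ ({dec' x', dec' y'} : Finset (Fin 4 → Bool)) := by
          rw [← hEq]; exact Finset.mem_insert_of_mem (Finset.mem_singleton_self _)
        rcases Finset.mem_insert.mp hm with h | h
        · exact Or.inl (dec_inj y (h16 y hy) x' (h16 x' hx') h)
        · exact Or.inr (dec_inj y (h16 y hy) y' (h16 y' hy')
            (Finset.mem_singleton.mp h))
      have hxx' : x = x' ∧ y = y' := by rcases e1 with rfl | rfl <;> rcases e2 with h | h <;> omega
      exact hpq (by rw [Prod.mk.injEq]; exact hxx')
end

section
/- Every 2-dimensional facet-continuous polycubic chain Q₁,…,Qₙ with more than 4 fractions whose body Q₁ ∪ ⋯ ∪ Qₙ is a square a + [0,s]² (a ∈ ℤ², s ∈ ℕ, n = s²) contains a collinear segment of length 3, i.e. there is an index i with c_{i+2} − c_{i+1} = c_{i+1} − c_i, where c_i denotes the lattice corner of Q_i. -/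
open Set

/-- The unit lattice cube with corner `v ∈ ℤ^d`. -/
def cubeAt (d : ℕ) (v : Fin d → ℤ) : Set (EuclideanSpace ℝ (Fin d)) :=
  {x | ∀ i, x i ∈ Icc (v i : ℝ) ((v i : ℝ) + 1)}

/-- A polycubic chain of length `n` in `ℝ^d`, given by the corners `c 0, …, c (n-1)`:
the corners are pairwise distinct and consecutive corners differ by a vector in
`{-1,0,1}^d \ {0}`. -/
def IsPolycubicChain (d n : ℕ) (c : ℕ → Fin d → ℤ) : Prop :=
  (∀ i j, i < n → j < n → c i = c j → i = j) ∧
  ∀ i, i + 1 < n →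
    (∀ idx, c (i + 1) idx - c i idx ∈ ({-1, 0, 1} : Set ℤ)) ∧ c (i + 1) ≠ c i

/-- The chain is facet-continuous: each step is ± a standard basis vector. -/
def FacetContinuous (d n : ℕ) (c : ℕ → Fin d → ℤ) : Prop :=
  ∀ i, i + 1 < n → ∃ j : Fin d,
    (c (i + 1) j - c i j = 1 ∨ c (i + 1) j - c i j = -1) ∧
    ∀ idx, idx ≠ j → c (i + 1) idx = c i idx

/-- The dilation of a polycubic chain: the maximum over all segments of
`diam^d / volume` of the body of the segment. -/
noncomputable def chainDilation (d n : ℕ) (c : ℕ → Fin d → ℤ) : ℝ :=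
  sSup {w : ℝ | ∃ i j : ℕ, i ≤ j ∧ j < n ∧
    w = Metric.diam (⋃ k ∈ Finset.Icc i j, cubeAt d (c k)) ^ d / ((j - i + 1 : ℕ) : ℝ)}

private lemma corner_lemma (n : ℕ) (X Y : ℕ → ℤ) (hn : 1 < n)
    (hinj : ∀ i j, i < n → j < n → X i = X j → Y i = Y j → i = j)
    (hstep : ∀ i, i + 1 < n →
      ((X (i+1) - X i = 1 ∨ X (i+1) - X i = -1) ∧ Y (i+1) = Y i) ∨
      (X (i+1) = X i ∧ (Y (i+1) - Y i = 1 ∨ Y (i+1) - Y i = -1)))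
    (hnot : ∀ i, i + 2 < n →
      X (i+2) - X (i+1) ≠ X (i+1) - X i ∨ Y (i+2) - Y (i+1) ≠ Y (i+1) - Y i)
    (v0 v1 : ℤ)
    (hext : ∀ k, k < n → v0 ≤ X k ∧ v1 ≤ Y k)
    (hv : ∃ k, k < n ∧ X k = v0 ∧ Y k = v1) :
    ((X 0 = v0 ∧ Y 0 = v1) ∨ (X 1 = v0 ∧ Y 1 = v1)) ∨
    ((X (n-1) = v0 ∧ Y (n-1) = v1) ∨ (X (n-2) = v0 ∧ Y (n-2) = v1)) := by
  obtain ⟨k, hk, hkx, hky⟩ := hv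
  by_cases h0 : k = 0
  · subst h0; exact Or.inl (Or.inl ⟨hkx, hky⟩)
  by_cases h1 : k = 1
  · subst h1; exact Or.inl (Or.inr ⟨hkx, hky⟩)
  by_cases hlast : k = n - 1
  · subst hlast; exact Or.inr (Or.inl ⟨hkx, hky⟩)
  by_cases hlast2 : k = n - 2
  · subst hlast2; exact Or.inr (Or.inr ⟨hkx, hky⟩)
  exfalso
  obtain ⟨l, rfl⟩ : ∃ l, k = l + 2 := ⟨k - 2, by omega⟩
  -- all index bounds, before any disjunctive hypotheses enter the context
  have b0 : l + 1 < n := by omega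
  have b1 : l + 1 + 1 < n := by omega
  have b2 : l + 2 + 1 < n := by omega
  have b3 : l + 3 + 1 < n := by omega
  have c0 : l + 2 < n := by omega
  have c2 : l + 2 + 2 < n := by omega
  have g0 : l < n := by omega
  have g1 : l + 1 < n := by omega
  have g3 : l + 3 < n := by omega
  have g4 : l + 4 < n := by omega
  have ne02 : l ≠ l + 2 := by omega
  have ne13 : l + 1 ≠ l + 3 := by omega
  have ne24 : l + 2 ≠ l + 4 := by omega
  have ne04 : l ≠ l + 4 := by omega
  have d02 : ¬(X l = X (l+2) ∧ Y l = Y (l+2)) :=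
    fun ⟨p, q⟩ => ne02 (hinj l (l+2) g0 c0 p q)
  have d13 : ¬(X (l+1) = X (l+3) ∧ Y (l+1) = Y (l+3)) :=
    fun ⟨p, q⟩ => ne13 (hinj (l+1) (l+3) g1 g3 p q)
  have d24 : ¬(X (l+2) = X (l+4) ∧ Y (l+2) = Y (l+4)) :=
    fun ⟨p, q⟩ => ne24 (hinj (l+2) (l+4) c0 g4 p q)
  have d04 : ¬(X l = X (l+4) ∧ Y l = Y (l+4)) :=
    fun ⟨p, q⟩ => ne04 (hinj l (l+4) g0 g4 p q)
  have s0 := hstep l b0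
  have s1 := hstep (l+1) b1
  have s2 := hstep (l+2) b2
  have s3 := hstep (l+3) b3
  have n0 := hnot l c0
  have n2 := hnot (l+2) c2
  have e0 := hext l g0
  have e1 := hext (l+1) g1
  have e3 := hext (l+3) g3
  have e4 := hext (l+4) g4
  clear hinj hstep hnot hext hk h0 h1 hlast hlast2 hn
  clear b0 b1 b2 b3 c0 c2 g0 g1 g3 g4 ne02 ne13 ne24 ne04
  replace s1 : ((X (l+2) - X (l+1) = 1 ∨ X (l+2) - X (l+1) = -1) ∧ Y (l+2) = Y (l+1)) ∨
      (X (l+2) = X (l+1) ∧ (Y (l+2) - Y (l+1) = 1 ∨ Y (l+2) - Y (l+1) = -1)) := s1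
  replace s2 : ((X (l+3) - X (l+2) = 1 ∨ X (l+3) - X (l+2) = -1) ∧ Y (l+3) = Y (l+2)) ∨
      (X (l+3) = X (l+2) ∧ (Y (l+3) - Y (l+2) = 1 ∨ Y (l+3) - Y (l+2) = -1)) := s2
  replace s3 : ((X (l+4) - X (l+3) = 1 ∨ X (l+4) - X (l+3) = -1) ∧ Y (l+4) = Y (l+3)) ∨
      (X (l+4) = X (l+3) ∧ (Y (l+4) - Y (l+3) = 1 ∨ Y (l+4) - Y (l+3) = -1)) := s3
  replace n2 : X (l+4) - X (l+3) ≠ X (l+3) - X (l+2) ∨ Y (l+4) - Y (l+3) ≠ Y (l+3) - Y (l+2) := n2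
  -- the two neighbours of the corner cell are p = (v0+1,v1) or q = (v0,v1+1)
  have hc1 : (X (l+1) = v0 + 1 ∧ Y (l+1) = v1) ∨ (X (l+1) = v0 ∧ Y (l+1) = v1 + 1) := by
    clear s0 s2 s3 n0 n2 e0 e3 e4 d02 d13 d24 d04
    omega
  have hc3 : (X (l+3) = v0 + 1 ∧ Y (l+3) = v1) ∨ (X (l+3) = v0 ∧ Y (l+3) = v1 + 1) := by
    clear s0 s1 s3 n0 n2 e0 e1 e4 d02 d13 d24 d04 hc1
    omega
  -- the outer neighbours are forced to be the diagonal cell (v0+1, v1+1)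
  have hc0 : X l = v0 + 1 ∧ Y l = v1 + 1 := by
    clear s1 s2 s3 n2 e1 e3 e4 d13 d24 d04 hc3
    omega
  have hc4 : X (l+4) = v0 + 1 ∧ Y (l+4) = v1 + 1 := by
    clear s0 s1 s2 n0 e0 e1 e3 d02 d13 d04 hc1 hc0
    omega
  exact d04 ⟨hc0.1.trans hc4.1.symm, hc0.2.trans hc4.2.symm⟩

private lemma core_lemma (n : ℕ) (X Y : ℕ → ℤ) (hn : 4 < n)
    (hinj : ∀ i j, i < n → j < n → X i = X j → Y i = Y j → i = j)
    (hstep : ∀ i, i + 1 < n →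
      ((X (i+1) - X i = 1 ∨ X (i+1) - X i = -1) ∧ Y (i+1) = Y i) ∨
      (X (i+1) = X i ∧ (Y (i+1) - Y i = 1 ∨ Y (i+1) - Y i = -1)))
    (hnot : ∀ i, i + 2 < n →
      X (i+2) - X (i+1) ≠ X (i+1) - X i ∨ Y (i+2) - Y (i+1) ≠ Y (i+1) - Y i)
    (lo0 hi0 lo1 hi1 : ℤ) (hgap0 : lo0 + 2 ≤ hi0) (hgap1 : lo1 + 2 ≤ hi1)
    (hext : ∀ k, k < n → lo0 ≤ X k ∧ X k ≤ hi0 ∧ lo1 ≤ Y k ∧ Y k ≤ hi1)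
    (hva : ∃ k, k < n ∧ X k = lo0 ∧ Y k = lo1)
    (hvb : ∃ k, k < n ∧ X k = hi0 ∧ Y k = lo1)
    (hvc : ∃ k, k < n ∧ X k = lo0 ∧ Y k = hi1) : False := by
  have Ha := corner_lemma n X Y (by omega) hinj hstep hnot lo0 lo1
    (fun k hk => ⟨(hext k hk).1, (hext k hk).2.2.1⟩) hva
  have Hb := corner_lemma n (fun i => -X i) Y (by omega)
    (by intro i j hi hj p q; exact hinj i j hi hj (by omega) q)
    (by intro i h; have := hstep i h; omega)
    (by intro i h; have := hnot i h; omega)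
    (-hi0) lo1
    (by intro k hk; have := hext k hk; omega)
    (by obtain ⟨k, hk, p, q⟩ := hvb; exact ⟨k, hk, by omega, q⟩)
  have Hc := corner_lemma n X (fun i => -Y i) (by omega) 
    (by intro i j hi hj p q; exact hinj i j hi hj p (by omega))
    (by intro i h; have := hstep i h; omega)
    (by intro i h; have := hnot i h; omega)
    lo0 (-hi1)
    (by intro k hk; have := hext k hk; omega)
    (by obtain ⟨k, hk, p, q⟩ := hvc; exact ⟨k, hk, p, by omega⟩)
  have a01 := hstep 0 (by omega)
  replace a01 : ((X 1 - X 0 = 1 ∨ X 1 - X 0 = -1) ∧ Y 1 = Y 0) ∨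
      (X 1 = X 0 ∧ (Y 1 - Y 0 = 1 ∨ Y 1 - Y 0 = -1)) := a01
  have aend := hstep (n-2) (by omega)
  have e : n - 2 + 1 = n - 1 := by omega
  rw [e] at aend
  clear hinj hstep hnot hext hva hvb hvc e hn
  rcases Ha with (⟨p1, p2⟩ | ⟨p1, p2⟩) | (⟨p1, p2⟩ | ⟨p1, p2⟩) <;>
    rcases Hb with (⟨q1, q2⟩ | ⟨q1, q2⟩) | (⟨q1, q2⟩ | ⟨q1, q2⟩) <;>
      rcases Hc with (⟨r1, r2⟩ | ⟨r1, r2⟩) | (⟨r1, r2⟩ | ⟨r1, r2⟩) <;>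
        omega


/-- A 2D facet-continuous polycubic chain with more than 4 fractions whose body
is a square `a + [0,s]²` contains a collinear segment of length 3. -/
theorem square_chain_has_collinear_triple (s n : ℕ) (c : ℕ → Fin 2 → ℤ)
    (a : Fin 2 → ℤ) (hn : n = s ^ 2) (h4 : 4 < n)
    (hchain : IsPolycubicChain 2 n c) (hfc : FacetContinuous 2 n c)
    (hbody : (⋃ k ∈ Finset.range n, cubeAt 2 (c k)) =
      {x : EuclideanSpace ℝ (Fin 2) | ∀ i, x i ∈ Icc ((a i : ℝ)) ((a i : ℝ) + s)}) :
    ∃ i, i + 2 < n ∧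
      ∀ idx, c (i + 2) idx - c (i + 1) idx = c (i + 1) idx - c i idx := by
  by_contra hcon
  push_neg at hcon
  obtain ⟨hinj, -⟩ := hchain
  have hs3 : 3 ≤ s := by
    rcases Nat.lt_or_ge s 3 with h | h
    · exfalso; interval_cases s <;> norm_num at hn <;> omega
    · exact h
  have hsZ : (3:ℤ) ≤ (s:ℤ) := by exact_mod_cast hs3
  -- every cell of the chain lies in the big square
  have hmemZ : ∀ k, k < n → ∀ i, a i ≤ c k i ∧ c k i + 1 ≤ a i + (s:ℤ) := by
    intro k hk i
    have hx : (WithLp.toLp 2 (fun i => (c k i : ℝ) + 1/2) : EuclideanSpace ℝ (Fin 2)) ∈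
        (⋃ k ∈ Finset.range n, cubeAt 2 (c k)) := by
      refine Set.mem_biUnion (Finset.mem_range.2 hk) ?_
      simp only [cubeAt, mem_setOf_eq, mem_Icc, WithLp.ofLp_toLp]
      intro i
      constructor <;> norm_num
    rw [hbody] at hx
    simp only [mem_setOf_eq, mem_Icc, WithLp.ofLp_toLp] at hx
    obtain ⟨h1, h2⟩ := hx i
    constructor
    · have h3 : (a i : ℝ) < (c k i : ℝ) + 1 := by linarith
      have h4 : a i < c k i + 1 := by exact_mod_cast h3
      omega
    · have h3 : (c k i : ℝ) < (a i : ℝ) + (s:ℝ) := by linarith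
      have h4 : c k i < a i + (s:ℤ) := by exact_mod_cast h3
      omega
  -- every cell of the big square is a cell of the chain
  have hsurjZ : ∀ v : Fin 2 → ℤ, (∀ i, a i ≤ v i ∧ v i + 1 ≤ a i + (s:ℤ)) →
      ∃ k, k < n ∧ c k = v := by
    intro v hv
    have hx : (WithLp.toLp 2 (fun i => (v i : ℝ) + 1/2) : EuclideanSpace ℝ (Fin 2)) ∈
        (⋃ k ∈ Finset.range n, cubeAt 2 (c k)) := by
      rw [hbody]
      simp only [mem_setOf_eq, mem_Icc, WithLp.ofLp_toLp]
      intro i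
      obtain ⟨h1, h2⟩ := hv i
      have h1' : (a i : ℝ) ≤ (v i : ℝ) := by exact_mod_cast h1
      have h2' : (v i : ℝ) + 1 ≤ (a i : ℝ) + (s:ℝ) := by exact_mod_cast h2
      constructor <;> [linarith; linarith]
    simp only [Set.mem_iUnion, Finset.mem_range, cubeAt, mem_setOf_eq, mem_Icc, WithLp.ofLp_toLp] at hx
    obtain ⟨k, hk, hck⟩ := hx
    refine ⟨k, hk, funext fun i => ?_⟩
    obtain ⟨h1, h2⟩ := hck i
    have h1' : (c k i : ℝ) < (v i : ℝ) + 1 := by linarith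
    have h2' : (v i : ℝ) < (c k i : ℝ) + 1 := by linarith
    have h1'' : c k i < v i + 1 := by exact_mod_cast h1'
    have h2'' : v i < c k i + 1 := by exact_mod_cast h2'
    omega
  -- convert to the two coordinate sequences
  have hinjXY : ∀ i j, i < n → j < n → c i 0 = c j 0 → c i 1 = c j 1 → i = j := by
    intro i j hi hj h0 h1
    exact hinj i j hi hj (funext fun idx => by fin_cases idx <;> assumption)
  have hstepXY : ∀ i, i + 1 < n →
      ((c (i+1) 0 - c i 0 = 1 ∨ c (i+1) 0 - c i 0 = -1) ∧ c (i+1) 1 = c i 1) ∨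
      (c (i+1) 0 = c i 0 ∧ (c (i+1) 1 - c i 1 = 1 ∨ c (i+1) 1 - c i 1 = -1)) := by
    intro i h
    obtain ⟨j, hj1, hj2⟩ := hfc i h
    fin_cases j
    · exact Or.inl ⟨hj1, hj2 1 (by decide)⟩
    · exact Or.inr ⟨hj2 0 (by decide), hj1⟩
  have hnotXY : ∀ i, i + 2 < n →
      c (i+2) 0 - c (i+1) 0 ≠ c (i+1) 0 - c i 0 ∨
      c (i+2) 1 - c (i+1) 1 ≠ c (i+1) 1 - c i 1 := by
    intro i h
    obtain ⟨idx, hidx⟩ := hcon i h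
    fin_cases idx
    · exact Or.inl hidx
    · exact Or.inr hidx
  -- the three corner cells
  have hva : ∃ k, k < n ∧ c k 0 = a 0 ∧ c k 1 = a 1 := by
    obtain ⟨k, hk, hck⟩ := hsurjZ a (fun i => ⟨le_refl _, by omega⟩)
    exact ⟨k, hk, congrFun hck 0, congrFun hck 1⟩
  have hvb : ∃ k, k < n ∧ c k 0 = a 0 + (s:ℤ) - 1 ∧ c k 1 = a 1 := by
    obtain ⟨k, hk, hck⟩ := hsurjZ (fun i => if i = 0 then a 0 + (s:ℤ) - 1 else a 1)
      (fun i => by fin_cases i <;> simp <;> omega)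
    exact ⟨k, hk, by simpa using congrFun hck 0, by simpa using congrFun hck 1⟩
  have hvc : ∃ k, k < n ∧ c k 0 = a 0 ∧ c k 1 = a 1 + (s:ℤ) - 1 := by
    obtain ⟨k, hk, hck⟩ := hsurjZ (fun i => if i = 0 then a 0 else a 1 + (s:ℤ) - 1)
      (fun i => by fin_cases i <;> simp <;> omega)
    exact ⟨k, hk, by simpa using congrFun hck 0, by simpa using congrFun hck 1⟩
  exact core_lemma n (fun k => c k 0) (fun k => c k 1) h4 hinjXY hstepXY hnotXY
    (a 0) (a 0 + (s:ℤ) - 1) (a 1) (a 1 + (s:ℤ) - 1) (by omega) (by omega)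
    (fun k hk => by
      have h0 := hmemZ k hk 0
      have h1 := hmemZ k hk 1
      omega)
    hva hvb hvc
end

section
/- Every 3-dimensional facet-continuous polycubic chain Q₁, Q₂, Q₃, Q₄ of length 4 with empty intersection Q₁ ∩ Q₂ ∩ Q₃ ∩ Q₄ = ∅ has dilation at least 7√14/2 = 13.0958…. -/
open Set

/- ### Auxiliary material -/

def stepv (j : Fin 3) (s : Bool) : Fin 3 → ℤ := fun i => if i = j then (if s then 1 else -1) else 0

def vOf (j0 j1 j2 : Fin 3) (s0 s1 s2 : Bool) : Fin 4 → Fin 3 → ℤ :=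
  ![0, stepv j0 s0, fun i => stepv j0 s0 i + stepv j1 s1 i,
    fun i => stepv j0 s0 i + stepv j1 s1 i + stepv j2 s2 i]

set_option maxRecDepth 4000 in
lemma key : ∀ (j0 j1 j2 : Fin 3) (s0 s1 s2 : Bool),
    (∀ k l : Fin 4, vOf j0 j1 j2 s0 s1 s2 k = vOf j0 j1 j2 s0 s1 s2 l → k = l) →
    ((∀ i : Fin 3, ∀ k l : Fin 4, vOf j0 j1 j2 s0 s1 s2 k i - vOf j0 j1 j2 s0 s1 s2 l i ≤ 1) ∨
      14 ≤ ∑ i : Fin 3, (|vOf j0 j1 j2 s0 s1 s2 3 i| + 1) ^ 2) := by decide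

lemma step_of {a b : Fin 3 → ℤ}
    (h : ∃ j, (b j - a j = 1 ∨ b j - a j = -1) ∧ ∀ idx, idx ≠ j → b idx = a idx) :
    ∃ j s, ∀ i, b i = a i + stepv j s i := by
  obtain ⟨j, hj, ho⟩ := h
  rcases hj with h1 | h1
  · refine ⟨j, true, fun i => ?_⟩
    by_cases hi : i = j
    · subst hi; simp [stepv]; omega
    · simp [stepv, hi, ho i hi]
  · refine ⟨j, false, fun i => ?_⟩
    by_cases hi : i = j
    · subst hi; simp [stepv]; omega
    · simp [stepv, hi, ho i hi]

lemma cube_isBounded (v : Fin 3 → ℤ) : Bornology.IsBounded (cubeAt 3 v) := by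
  rw [Metric.isBounded_iff]
  refine ⟨2, fun x hx y hy => ?_⟩
  rw [EuclideanSpace.dist_eq]
  have hterm : ∀ i : Fin 3, dist (x i) (y i) ^ 2 ≤ 1 := by
    intro i
    have h1 := hx i
    have h2 := hy i
    simp only [mem_Icc] at h1 h2
    have hd : |x i - y i| ≤ 1 := by rw [abs_le]; constructor <;> linarith
    have := pow_le_pow_left₀ (abs_nonneg (x i - y i)) hd 2
    simpa [Real.dist_eq, sq_abs] using this
  have hsum : (∑ i : Fin 3, dist (x i) (y i) ^ 2) ≤ 4 := by
    calc (∑ i : Fin 3, dist (x i) (y i) ^ 2) ≤ ∑ _i : Fin 3, (1 : ℝ) :=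
          Finset.sum_le_sum fun i _ => hterm i
      _ = 3 := by simp
      _ ≤ 4 := by norm_num
  calc Real.sqrt (∑ i : Fin 3, dist (x i) (y i) ^ 2) ≤ Real.sqrt 4 := Real.sqrt_le_sqrt hsum
    _ = 2 := by rw [show (4 : ℝ) = 2 ^ 2 by norm_num, Real.sqrt_sq (by norm_num : (0:ℝ) ≤ 2)]

/-- A 3D facet-continuous polycubic chain of length 4 with empty intersection of
its fractions has dilation at least `7√14/2`. -/
theorem chain3d_four_empty_intersection_dilation_ge (c : ℕ → Fin 3 → ℤ)
    (hchain : IsPolycubicChain 3 4 c) (hfc : FacetContinuous 3 4 c)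
    (hempty : cubeAt 3 (c 0) ∩ cubeAt 3 (c 1) ∩ cubeAt 3 (c 2) ∩ cubeAt 3 (c 3) = ∅) :
    7 * Real.sqrt 14 / 2 ≤ chainDilation 3 4 c := by
  obtain ⟨hdist, -⟩ := hchain
  obtain ⟨j0, s0, hs0⟩ := step_of (hfc 0 (by norm_num))
  obtain ⟨j1, s1, hs1⟩ := step_of (hfc 1 (by norm_num))
  obtain ⟨j2, s2, hs2⟩ := step_of (hfc 2 (by norm_num))
  have hc1 : ∀ i, c 1 i = c 0 i + stepv j0 s0 i := fun i => hs0 i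
  have hc2 : ∀ i, c 2 i = c 1 i + stepv j1 s1 i := fun i => hs1 i
  have hc3 : ∀ i, c 3 i = c 2 i + stepv j2 s2 i := fun i => hs2 i
  have hv0 : ∀ i, c 0 i = c 0 i + vOf j0 j1 j2 s0 s1 s2 0 i := by
    intro i; simp [vOf]
  have hv1 : ∀ i, c 1 i = c 0 i + vOf j0 j1 j2 s0 s1 s2 1 i := by
    intro i; have := hc1 i; simp only [vOf, Matrix.cons_val_one, Matrix.head_cons, Matrix.cons_val_zero]; omega
  have hv2 : ∀ i, c 2 i = c 0 i + vOf j0 j1 j2 s0 s1 s2 2 i := by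
    intro i; have h1 := hc1 i; have h2 := hc2 i
    show c 2 i = c 0 i + (stepv j0 s0 i + stepv j1 s1 i)
    omega
  have hv3 : ∀ i, c 3 i = c 0 i + vOf j0 j1 j2 s0 s1 s2 3 i := by
    intro i; have h1 := hc1 i; have h2 := hc2 i; have h3 := hc3 i
    show c 3 i = c 0 i + (stepv j0 s0 i + stepv j1 s1 i + stepv j2 s2 i)
    omega
  have hv : ∀ k : Fin 4, ∀ i, c (k : ℕ) i = c 0 i + vOf j0 j1 j2 s0 s1 s2 k i := by
    intro k i
    fin_cases k
    · exact hv0 i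
    · exact hv1 i
    · exact hv2 i
    · exact hv3 i
  have hdV : ∀ k l : Fin 4, vOf j0 j1 j2 s0 s1 s2 k = vOf j0 j1 j2 s0 s1 s2 l → k = l := by
    intro k l h
    have hc : c (k : ℕ) = c (l : ℕ) := funext fun i => by rw [hv k i, hv l i, h]
    exact Fin.ext (hdist _ _ k.isLt l.isLt hc)
  rcases key j0 j1 j2 s0 s1 s2 hdV with hsp | hsum
  · -- all coordinate spreads ≤ 1 : build a common point, contradiction
    exfalso
    have hpair : ∀ i : Fin 3,
        (c 0 i - c 1 i ≤ 1) ∧ (c 0 i - c 2 i ≤ 1) ∧ (c 0 i - c 3 i ≤ 1) ∧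
        (c 1 i - c 0 i ≤ 1) ∧ (c 1 i - c 2 i ≤ 1) ∧ (c 1 i - c 3 i ≤ 1) ∧
        (c 2 i - c 0 i ≤ 1) ∧ (c 2 i - c 1 i ≤ 1) ∧ (c 2 i - c 3 i ≤ 1) ∧
        (c 3 i - c 0 i ≤ 1) ∧ (c 3 i - c 1 i ≤ 1) ∧ (c 3 i - c 2 i ≤ 1) := by
      intro i
      have h0 := hv0 i; have h1 := hv1 i; have h2 := hv2 i; have h3 := hv3 i
      have q01 := hsp i 0 1; have q02 := hsp i 0 2; have q03 := hsp i 0 3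
      have q10 := hsp i 1 0; have q12 := hsp i 1 2; have q13 := hsp i 1 3
      have q20 := hsp i 2 0; have q21 := hsp i 2 1; have q23 := hsp i 2 3
      have q30 := hsp i 3 0; have q31 := hsp i 3 1; have q32 := hsp i 3 2
      refine ⟨?_, ?_, ?_, ?_, ?_, ?_, ?_, ?_, ?_, ?_, ?_, ?_⟩ <;> omega
    set pt : EuclideanSpace ℝ (Fin 3) :=
      WithLp.toLp 2 (fun i => ((max (max (c 0 i) (c 1 i)) (max (c 2 i) (c 3 i)) : ℤ) : ℝ)) with hpt
    have hub : ∀ i : Fin 3, ∀ K : ℕ,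
        max (max (c 0 i) (c 1 i)) (max (c 2 i) (c 3 i)) ≤ c K i + 1 →
        c K i ≤ max (max (c 0 i) (c 1 i)) (max (c 2 i) (c 3 i)) →
        pt i ∈ Icc ((c K i : ℝ)) ((c K i : ℝ) + 1) := by
      intro i K h1 h2
      constructor
      · simp only [hpt, PiLp.toLp_apply]; exact_mod_cast h2
      · simp only [hpt, PiLp.toLp_apply]
        have h1' : ((max (max (c 0 i) (c 1 i)) (max (c 2 i) (c 3 i)) : ℤ) : ℝ)
            ≤ ((c K i + 1 : ℤ) : ℝ) := Int.cast_le.mpr h1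
        push_cast at h1'
        exact_mod_cast h1'
    have hmem0 : pt ∈ cubeAt 3 (c 0) := by
      intro i
      obtain ⟨p1, p2, p3, p4, p5, p6, p7, p8, p9, p10, p11, p12⟩ := hpair i
      refine hub i 0 ?_ ?_
      · simp only [max_le_iff]; refine ⟨⟨?_, ?_⟩, ?_, ?_⟩ <;> omega
      · exact le_max_of_le_left (le_max_left _ _)
    have hmem1 : pt ∈ cubeAt 3 (c 1) := by
      intro i
      obtain ⟨p1, p2, p3, p4, p5, p6, p7, p8, p9, p10, p11, p12⟩ := hpair i
      refine hub i 1 ?_ ?_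
      · simp only [max_le_iff]; refine ⟨⟨?_, ?_⟩, ?_, ?_⟩ <;> omega
      · exact le_max_of_le_left (le_max_right _ _)
    have hmem2 : pt ∈ cubeAt 3 (c 2) := by
      intro i
      obtain ⟨p1, p2, p3, p4, p5, p6, p7, p8, p9, p10, p11, p12⟩ := hpair i
      refine hub i 2 ?_ ?_
      · simp only [max_le_iff]; refine ⟨⟨?_, ?_⟩, ?_, ?_⟩ <;> omega
      · exact le_max_of_le_right (le_max_left _ _)
    have hmem3 : pt ∈ cubeAt 3 (c 3) := by
      intro i
      obtain ⟨p1, p2, p3, p4, p5, p6, p7, p8, p9, p10, p11, p12⟩ := hpair i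
      refine hub i 3 ?_ ?_
      · simp only [max_le_iff]; refine ⟨⟨?_, ?_⟩, ?_, ?_⟩ <;> omega
      · exact le_max_of_le_right (le_max_right _ _)
    have hptmem : pt ∈ cubeAt 3 (c 0) ∩ cubeAt 3 (c 1) ∩ cubeAt 3 (c 2) ∩ cubeAt 3 (c 3) :=
      ⟨⟨⟨hmem0, hmem1⟩, hmem2⟩, hmem3⟩
    rw [hempty] at hptmem
    exact hptmem
  · -- the sum of squared (spread+1) is ≥ 14 : dilation bound
    have hD : ∀ i, c 3 i - c 0 i = vOf j0 j1 j2 s0 s1 s2 3 i := fun i => by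
      have := hv3 i; omega
    have hsum' : (14 : ℤ) ≤ ∑ i : Fin 3, (|c 3 i - c 0 i| + 1) ^ 2 := by
      calc (14 : ℤ) ≤ ∑ i : Fin 3, (|vOf j0 j1 j2 s0 s1 s2 3 i| + 1) ^ 2 := hsum
        _ = ∑ i : Fin 3, (|c 3 i - c 0 i| + 1) ^ 2 := by
            refine Finset.sum_congr rfl fun i _ => by rw [hD i]
    set x : EuclideanSpace ℝ (Fin 3) :=
      WithLp.toLp 2 (fun i => if 0 ≤ c 3 i - c 0 i then (c 0 i : ℝ) else (c 0 i : ℝ) + 1) with hxdef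
    set y : EuclideanSpace ℝ (Fin 3) :=
      WithLp.toLp 2 (fun i => if 0 ≤ c 3 i - c 0 i then (c 3 i : ℝ) + 1 else (c 3 i : ℝ)) with hydef
    have hx : x ∈ cubeAt 3 (c 0) := by
      intro i
      simp only [hxdef, PiLp.toLp_apply]
      refine ⟨?_, ?_⟩ <;> split <;> try push_cast
      all_goals linarith
    have hy : y ∈ cubeAt 3 (c 3) := by
      intro i
      simp only [hydef, PiLp.toLp_apply]
      refine ⟨?_, ?_⟩ <;> split <;> try push_cast
      all_goals linarith
    have hdistxy : Real.sqrt 14 ≤ dist x y := by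
      rw [EuclideanSpace.dist_eq]
      apply Real.sqrt_le_sqrt
      have hterm : ∀ i : Fin 3, ((|c 3 i - c 0 i| + 1 : ℤ) : ℝ) ^ 2 = dist (x i) (y i) ^ 2 := by
        intro i
        rw [Real.dist_eq, sq_abs]
        simp only [hxdef, hydef, PiLp.toLp_apply]
        rcases le_or_gt 0 (c 3 i - c 0 i) with h | h
        · rw [if_pos h, if_pos h]
          have h' : |c 3 i - c 0 i| = c 3 i - c 0 i := abs_of_nonneg h
          rw [h']; push_cast; ring
        · rw [if_neg (not_le.mpr h), if_neg (not_le.mpr h)]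
          have h' : |c 3 i - c 0 i| = -(c 3 i - c 0 i) := abs_of_neg h
          rw [h']; push_cast; ring
      calc (14 : ℝ) ≤ ((∑ i : Fin 3, (|c 3 i - c 0 i| + 1) ^ 2 : ℤ) : ℝ) := by
            exact_mod_cast hsum'
        _ = ∑ i : Fin 3, ((|c 3 i - c 0 i| + 1 : ℤ) : ℝ) ^ 2 := by push_cast; ring
        _ = ∑ i : Fin 3, dist (x i) (y i) ^ 2 := Finset.sum_congr rfl fun i _ => hterm i
    set U : Set (EuclideanSpace ℝ (Fin 3)) := ⋃ k ∈ Finset.Icc 0 3, cubeAt 3 (c k) with hU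
    have hUb : Bornology.IsBounded U := by
      rw [hU]
      exact (Bornology.isBounded_biUnion_finset _).2 fun k _ => cube_isBounded (c k)
    have hxU : x ∈ U := by
      rw [hU]
      exact Set.subset_biUnion_of_mem (u := fun k => cubeAt 3 (c k))
        (by decide : (0 : ℕ) ∈ Finset.Icc 0 3) hx
    have hyU : y ∈ U := by
      rw [hU]
      exact Set.subset_biUnion_of_mem (u := fun k => cubeAt 3 (c k))
        (by decide : (3 : ℕ) ∈ Finset.Icc 0 3) hy
    have hdiam : Real.sqrt 14 ≤ Metric.diam U :=
      le_trans hdistxy (Metric.dist_le_diam_of_mem hUb hxU hyU)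
    have hmemS : Metric.diam U ^ 3 / ((3 - 0 + 1 : ℕ) : ℝ) ∈
        {w : ℝ | ∃ i j : ℕ, i ≤ j ∧ j < 4 ∧
          w = Metric.diam (⋃ k ∈ Finset.Icc i j, cubeAt 3 (c k)) ^ 3 / ((j - i + 1 : ℕ) : ℝ)} :=
      ⟨0, 3, by norm_num, by norm_num, rfl⟩
    have hbdd : BddAbove {w : ℝ | ∃ i j : ℕ, i ≤ j ∧ j < 4 ∧
        w = Metric.diam (⋃ k ∈ Finset.Icc i j, cubeAt 3 (c k)) ^ 3 / ((j - i + 1 : ℕ) : ℝ)} := by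
      refine ⟨Metric.diam U ^ 3, fun w hw => ?_⟩
      obtain ⟨i, j, hij, hj, rfl⟩ := hw
      have hsub : (⋃ k ∈ Finset.Icc i j, cubeAt 3 (c k)) ⊆ U := by
        rw [hU]
        refine Set.iUnion_subset fun k => Set.iUnion_subset fun hk => ?_
        refine Set.subset_biUnion_of_mem (u := fun k => cubeAt 3 (c k)) ?_
        simp only [Finset.mem_Icc] at hk
        exact Finset.mem_Icc.mpr (by omega)
      have h1 : Metric.diam (⋃ k ∈ Finset.Icc i j, cubeAt 3 (c k)) ≤ Metric.diam U :=
        Metric.diam_mono hsub hUb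
      have h2 : Metric.diam (⋃ k ∈ Finset.Icc i j, cubeAt 3 (c k)) ^ 3 ≤ Metric.diam U ^ 3 :=
        pow_le_pow_left₀ Metric.diam_nonneg h1 3
      have h3 : (1 : ℝ) ≤ ((j - i + 1 : ℕ) : ℝ) := by
        have : 1 ≤ j - i + 1 := by omega
        exact_mod_cast this
      have h4 : (0 : ℝ) ≤ Metric.diam (⋃ k ∈ Finset.Icc i j, cubeAt 3 (c k)) ^ 3 :=
        pow_nonneg Metric.diam_nonneg 3
      calc Metric.diam (⋃ k ∈ Finset.Icc i j, cubeAt 3 (c k)) ^ 3 / ((j - i + 1 : ℕ) : ℝ)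
          ≤ Metric.diam (⋃ k ∈ Finset.Icc i j, cubeAt 3 (c k)) ^ 3 :=
            div_le_self h4 h3
        _ ≤ Metric.diam U ^ 3 := h2
    have hfin : 7 * Real.sqrt 14 / 2 ≤ Metric.diam U ^ 3 / ((3 - 0 + 1 : ℕ) : ℝ) := by
      have h14 : Real.sqrt 14 ^ 2 = 14 := Real.sq_sqrt (by norm_num)
      have hcube : Real.sqrt 14 ^ 3 ≤ Metric.diam U ^ 3 :=
        pow_le_pow_left₀ (Real.sqrt_nonneg 14) hdiam 3
      have heq : Real.sqrt 14 ^ 3 = 14 * Real.sqrt 14 := by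
        rw [pow_succ, h14]
      have h4 : ((3 - 0 + 1 : ℕ) : ℝ) = 4 := by norm_num
      rw [h4]
      rw [heq] at hcube
      linarith
    exact le_trans hfin (le_csSup hbdd hmemS)
end

section
/- If a 3-dimensional polycubic chain Q₁,…,Qₙ whose body Q₁ ∪ ⋯ ∪ Qₙ is a cube a + [0,s]³ (a ∈ ℤ³, s ∈ ℕ, n = s³) has more than 8 fractions, then it contains a 5-cubic segment with empty intersection, i.e. there is an index i with 1 ≤ i ≤ n − 4 such that Qᵢ ∩ Qᵢ₊₁ ∩ Qᵢ₊₂ ∩ Qᵢ₊₃ ∩ Qᵢ₊₄ = ∅. -/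
open Set

/-- A 3D polycubic chain with cubic body `a + [0,s]³` and more than 8 fractions
contains a 5-cubic segment with empty intersection. -/
theorem cubic_body_chain_has_empty_five_segment (s n : ℕ) (c : ℕ → Fin 3 → ℤ)
    (a : Fin 3 → ℤ) (hn : n = s ^ 3) (h8 : 8 < n)
    (hchain : IsPolycubicChain 3 n c)
    (hbody : (⋃ k ∈ Finset.range n, cubeAt 3 (c k)) =
      {x : EuclideanSpace ℝ (Fin 3) | ∀ i, x i ∈ Icc ((a i : ℝ)) ((a i : ℝ) + s)}) :
    ∃ i, i + 4 < n ∧ (⋂ k ∈ Finset.Icc i (i + 4), cubeAt 3 (c k)) = ∅ := by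
  by_contra hno
  push_neg at hno
  -- s ≥ 3
  have hs3 : 3 ≤ s := by
    by_contra h
    push_neg at h
    have h2 : s ≤ 2 := by omega
    have : s ^ 3 ≤ 2 ^ 3 := Nat.pow_le_pow_left h2 3
    omega
  have hs3' : (3 : ℤ) ≤ (s : ℤ) := by exact_mod_cast hs3
  -- every corner lies within the lattice box
  have hlo : ∀ k, k < n → ∀ i, a i ≤ c k i ∧ c k i ≤ a i + (s : ℤ) - 1 := by
    intro k hk
    have hx : (WithLp.toLp 2 (fun j => (c k j : ℝ) + 1/2) : EuclideanSpace ℝ (Fin 3)) ∈ cubeAt 3 (c k) := by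
      simp only [cubeAt, mem_setOf_eq, mem_Icc, PiLp.toLp_apply]
      intro j
      constructor <;> norm_num
    have hxU : (WithLp.toLp 2 (fun j => (c k j : ℝ) + 1/2) : EuclideanSpace ℝ (Fin 3)) ∈
        ⋃ m ∈ Finset.range n, cubeAt 3 (c m) :=
      Set.mem_iUnion₂.mpr ⟨k, Finset.mem_range.mpr hk, hx⟩
    rw [hbody] at hxU
    simp only [mem_setOf_eq, mem_Icc, PiLp.toLp_apply] at hxU
    intro i
    have h1 := hxU i
    constructor
    · have h2 : (a i : ℝ) < (c k i : ℝ) + 1 := by linarith [h1.1]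
      have h3 : a i < c k i + 1 := by exact_mod_cast h2
      omega
    · have h2 : (c k i : ℝ) < (a i : ℝ) + (s : ℝ) := by linarith [h1.2]
      have h3 : c k i < a i + (s : ℤ) := by exact_mod_cast h2
      omega
  -- every lattice point in the box is some c k
  have hcov : ∀ v : Fin 3 → ℤ, (∀ i, a i ≤ v i ∧ v i ≤ a i + (s : ℤ) - 1) →
      ∃ k, k < n ∧ c k = v := by
    intro v hv
    have hx : (WithLp.toLp 2 (fun j => (v j : ℝ) + 1/2) : EuclideanSpace ℝ (Fin 3)) ∈
        {x : EuclideanSpace ℝ (Fin 3) | ∀ i, x i ∈ Icc ((a i : ℝ)) ((a i : ℝ) + s)} := by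
      simp only [mem_setOf_eq, mem_Icc, PiLp.toLp_apply]
      intro i
      have h1 : (a i : ℝ) ≤ (v i : ℝ) := by exact_mod_cast (hv i).1
      have h2 : (v i : ℝ) ≤ (a i : ℝ) + (s : ℝ) - 1 := by
        have := (hv i).2
        have : (v i : ℝ) ≤ ((a i + (s : ℤ) - 1 : ℤ) : ℝ) := by exact_mod_cast this
        push_cast at this
        linarith
      constructor <;> linarith
    rw [← hbody] at hx
    obtain ⟨k, hk, hxk⟩ := Set.mem_iUnion₂.mp hx
    refine ⟨k, Finset.mem_range.mp hk, ?_⟩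
    funext i
    simp only [cubeAt, mem_setOf_eq, PiLp.toLp_apply] at hxk
    have h1 := hxk i
    simp only [mem_Icc] at h1
    have h2 : c k i < v i + 1 := by
      have : (c k i : ℝ) < (v i : ℝ) + 1 := by linarith [h1.1]
      exact_mod_cast this
    have h3 : v i < c k i + 1 := by
      have : (v i : ℝ) < (c k i : ℝ) + 1 := by linarith [h1.2]
      exact_mod_cast this
    omega
  -- any two cubes in a nonempty 5-window are Chebyshev-close
  have hwin : ∀ i, i + 4 < n → ∀ k ∈ Finset.Icc i (i+4), ∀ l ∈ Finset.Icc i (i+4),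
      ∀ idx, c k idx ≤ c l idx + 1 := by
    intro i hi k hk l hl idx
    obtain ⟨x, hx⟩ := hno i hi
    have hxk : x ∈ cubeAt 3 (c k) := Set.mem_iInter₂.mp hx k hk
    have hxl : x ∈ cubeAt 3 (c l) := Set.mem_iInter₂.mp hx l hl
    simp only [cubeAt, mem_setOf_eq] at hxk hxl
    have h1 := hxk idx
    have h2 := hxl idx
    simp only [mem_Icc] at h1 h2
    have : (c k idx : ℝ) ≤ (c l idx : ℝ) + 1 := by linarith [h1.1, h2.2]
    exact_mod_cast this
  -- a corner cell of the big cube cannot be visited in the middle of the chain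
  have hmid : ∀ t, 4 ≤ t → t + 4 < n →
      ¬ (∀ i, c t i = a i ∨ c t i = a i + ((s : ℤ) - 1)) := by
    intro t h4 htn hcorner
    set b : Fin 3 → ℤ := fun i => max (a i) (c t i - 1) with hb
    have hmemS : ∀ k ∈ Finset.Icc (t-4) (t+4), ∀ i,
        c k i ∈ Finset.Icc (b i) (b i + 1) := by
      intro k hk i
      rw [Finset.mem_Icc] at hk
      have hkn : k < n := by omega
      have hbk := hlo k hkn i
      have hstep : c k i ≤ c t i + 1 ∧ c t i ≤ c k i + 1 := by
        rcases le_or_gt k t with h | h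
        · have hkm : k ∈ Finset.Icc (t-4) ((t-4)+4) := Finset.mem_Icc.mpr (by omega)
          have htm : t ∈ Finset.Icc (t-4) ((t-4)+4) := Finset.mem_Icc.mpr (by omega)
          have hi4 : (t-4) + 4 < n := by omega
          exact ⟨hwin (t-4) hi4 k hkm t htm i, hwin (t-4) hi4 t htm k hkm i⟩
        · have hkm : k ∈ Finset.Icc t (t+4) := Finset.mem_Icc.mpr (by omega)
          have htm : t ∈ Finset.Icc t (t+4) := Finset.mem_Icc.mpr (by omega)
          exact ⟨hwin t htn k hkm t htm i, hwin t htn t htm k hkm i⟩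
      rw [Finset.mem_Icc]
      rcases hcorner i with h | h
      · have hbi : b i = a i := sup_eq_left.mpr (by omega)
        omega
      · have hbi : b i = c t i - 1 := sup_eq_right.mpr (by omega)
        omega
    -- the 9 cubes around t are distinct, but live in a set of 8 cells
    have hinj : Set.InjOn c (Finset.Icc (t-4) (t+4)) := by
      intro x hx y hy hxy
      simp only [Finset.coe_Icc, mem_Icc] at hx hy
      exact hchain.1 x y (by omega) (by omega) hxy
    have hcard9 : ((Finset.Icc (t-4) (t+4)).image c).card = 9 := by
      rw [Finset.card_image_of_injOn hinj, Nat.card_Icc]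
      omega
    have hsub : (Finset.Icc (t-4) (t+4)).image c ⊆
        Fintype.piFinset (fun i => Finset.Icc (b i) (b i + 1)) := by
      intro v hv
      rw [Finset.mem_image] at hv
      obtain ⟨k, hk, hkv⟩ := hv
      rw [Fintype.mem_piFinset]
      intro i
      rw [← hkv]
      exact hmemS k hk i
    have hScard : (Fintype.piFinset (fun i : Fin 3 => Finset.Icc (b i) (b i + 1))).card = 8 := by
      rw [Fintype.card_piFinset]
      have h2 : ∀ i : Fin 3, (Finset.Icc (b i) (b i + 1)).card = 2 := by
        intro i
        rw [Int.card_Icc]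
        omega
      simp [h2]
    have := Finset.card_le_card hsub
    omega
  -- the 8 corners of the big cube
  have hcorners : ∀ e : Fin 3 → Bool, ∃ k, k < n ∧
      c k = (fun i => if e i then a i + ((s : ℤ) - 1) else a i) := by
    intro e
    apply hcov
    intro i
    by_cases h : e i <;> simp [h] <;> omega
  choose t ht hct using hcorners
  have htinj : Function.Injective t := by
    intro e f hef
    have hc : c (t e) = c (t f) := by rw [hef]
    rw [hct e, hct f] at hc
    funext i
    have hce := congrFun hc i
    cases hei : e i <;> cases hfi : f i <;> simp [hei, hfi] at hce ⊢ <;> omega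
  -- each corner-visiting time is within 4 of an end
  have hend : ∀ e, t e ≤ 3 ∨ n - 4 ≤ t e := by
    intro e
    by_contra h
    push_neg at h
    apply hmid (t e) (by omega) (by omega)
    intro i
    have hc := congrFun (hct e) i
    cases hei : e i <;> simp [hei] at hc
    · exact Or.inl hc
    · exact Or.inr hc
  -- pigeonhole: times map injectively into 8 slots
  set T : Finset ℕ := Finset.range 4 ∪ Finset.Icc (n-4) (n-1) with hT
  have himg : Finset.univ.image t ⊆ T := by
    intro x hx
    rw [Finset.mem_image] at hx
    obtain ⟨e, -, he⟩ := hx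
    subst he
    rcases hend e with h | h
    · exact Finset.mem_union_left _ (Finset.mem_range.mpr (by omega))
    · exact Finset.mem_union_right _ (Finset.mem_Icc.mpr ⟨h, by have := ht e; omega⟩)
  have hTcard : T.card ≤ 8 := by
    refine le_trans (Finset.card_union_le _ _) ?_
    rw [Finset.card_range, Nat.card_Icc]
    omega
  have himgcard : (Finset.univ.image t).card = 8 := by
    rw [Finset.card_image_of_injective _ htinj]
    simp
  have hTeq : Finset.univ.image t = T :=
    Finset.eq_of_subset_of_card_le himg (by omega)
  -- times 0 and 1 are both corner visits
  have h0T : (0 : ℕ) ∈ T := Finset.mem_union_left _ (by simp)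
  have h1T : (1 : ℕ) ∈ T := Finset.mem_union_left _ (by simp)
  rw [← hTeq, Finset.mem_image] at h0T h1T
  obtain ⟨e, -, he⟩ := h0T
  obtain ⟨f, -, hf⟩ := h1T
  -- but consecutive cubes are Chebyshev-close while distinct corners are far
  have hef : e ≠ f := by
    intro h
    rw [h, hf] at he
    omega
  obtain ⟨i, hi⟩ := Function.ne_iff.mp hef
  have hstep := (hchain.2 0 (by omega)).1 i
  simp only [mem_insert_iff, mem_singleton_iff] at hstep
  have e0 : c 0 i = (if e i then a i + ((s : ℤ) - 1) else a i) := by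
    rw [← he]
    exact congrFun (hct e) i
  have e1 : c 1 i = (if f i then a i + ((s : ℤ) - 1) else a i) := by
    rw [← hf]
    exact congrFun (hct f) i
  have hstep' : c 1 i - c 0 i = -1 ∨ c 1 i - c 0 i = 0 ∨ c 1 i - c 0 i = 1 := hstep
  cases hei : e i with
  | false =>
    cases hfi : f i with
    | false => exact hi (hei.trans hfi.symm)
    | true =>
      simp [hei] at e0
      simp [hfi] at e1
      omega
  | true =>
    cases hfi : f i with
    | false =>
      simp [hei] at e0
      simp [hfi] at e1
      omega
    | true => exact hi (hei.trans hfi.symm)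
end

section
/- Every 4-dimensional facet-continuous polycubic chain Q₁,…,Qₙ with more than one fraction whose body Q₁ ∪ ⋯ ∪ Qₙ is a cube a + [0,s]⁴ (a ∈ ℤ⁴, s ∈ ℕ, n = s⁴) has dilation at least 42.25 (= 169/4). -/
open Set

/- ### Auxiliary lemmas -/

/-- Two lattice unit cubes always contain points at squared distance
`∑ (|δᵢ| + 1)²` where `δ` is the difference of corners. -/
lemma dist_sq_cubes (v w : Fin 4 → ℤ) :
    ∃ x ∈ cubeAt 4 v, ∃ y ∈ cubeAt 4 w,
      dist x y ^ 2 = ∑ i : Fin 4, (((|w i - v i| : ℤ) : ℝ) + 1)^2 := by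
  classical
  refine ⟨WithLp.toLp 2 (fun i => if v i ≤ w i then (v i : ℝ) else (v i : ℝ) + 1), ?_,
          WithLp.toLp 2 (fun i => if v i ≤ w i then (w i : ℝ) + 1 else (w i : ℝ)), ?_, ?_⟩
  · intro i
    dsimp only [WithLp.ofLp_toLp]
    split <;> constructor <;> norm_num
  · intro i
    dsimp only [WithLp.ofLp_toLp]
    split <;> constructor <;> norm_num
  · rw [EuclideanSpace.dist_eq, Real.sq_sqrt (Finset.sum_nonneg fun i _ => by positivity)]
    refine Finset.sum_congr rfl fun i _ => ?_
    rw [Real.dist_eq, sq_abs]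
    dsimp only [WithLp.ofLp_toLp]
    split
    · rename_i h
      rw [abs_of_nonneg (by omega : (0:ℤ) ≤ w i - v i)]
      push_cast; ring
    · rename_i h
      rw [abs_of_neg (by omega : (w i - v i : ℤ) < 0)]
      push_cast; ring

lemma sum_split4 (f : Fin 4 → ℝ) (hf : ∀ i, 1 ≤ f i) (S : Finset (Fin 4)) :
    ∑ i ∈ S, f i + ((4 - S.card : ℕ) : ℝ) ≤ ∑ i : Fin 4, f i := by
  have hsub : S ⊆ Finset.univ := Finset.subset_univ S
  have hsplit : ∑ i ∈ Finset.univ \ S, f i + ∑ i ∈ S, f i = ∑ i : Fin 4, f i :=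
    Finset.sum_sdiff hsub
  have hcard : (Finset.univ \ S).card = 4 - S.card := by
    rw [Finset.card_sdiff_of_subset hsub]
    simp
  have hge : ((Finset.univ \ S).card : ℝ) ≤ ∑ i ∈ Finset.univ \ S, f i := by
    have := Finset.card_nsmul_le_sum (Finset.univ \ S) f 1 (fun i _ => hf i)
    simpa using this
  rw [hcard] at hge
  linarith

lemma sum_ge_one4 (f : Fin 4 → ℝ) (hf : ∀ i, 1 ≤ f i) (j : Fin 4) :
    f j + 3 ≤ ∑ i : Fin 4, f i := by
  have := sum_split4 f hf {j}
  simpa using this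

lemma sum_ge_two4 (f : Fin 4 → ℝ) (hf : ∀ i, 1 ≤ f i) (j k : Fin 4) (hjk : j ≠ k) :
    f j + f k + 2 ≤ ∑ i : Fin 4, f i := by
  have := sum_split4 f hf {j, k}
  rw [Finset.sum_insert (by simpa using hjk), Finset.sum_singleton,
    Finset.card_insert_of_notMem (by simpa using hjk), Finset.card_singleton] at this
  norm_num at this
  linarith

lemma sum_ge_three4 (f : Fin 4 → ℝ) (hf : ∀ i, 1 ≤ f i) (j k l : Fin 4)
    (hjk : j ≠ k) (hjl : j ≠ l) (hkl : k ≠ l) :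
    f j + f k + f l + 1 ≤ ∑ i : Fin 4, f i := by
  have := sum_split4 f hf {j, k, l}
  rw [Finset.sum_insert (by simp [hjk, hjl]), Finset.sum_insert (by simpa using hkl),
    Finset.sum_singleton, Finset.card_insert_of_notMem (by simp [hjk, hjl]),
    Finset.card_insert_of_notMem (by simpa using hkl), Finset.card_singleton] at this
  norm_num at this
  linarith

lemma one_le_absterm (v w : Fin 4 → ℤ) (i : Fin 4) :
    (1:ℝ) ≤ (((|w i - v i| : ℤ) : ℝ) + 1)^2 := by
  have h0 : (0:ℝ) ≤ ((|w i - v i| : ℤ) : ℝ) := by exact_mod_cast abs_nonneg (w i - v i)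
  nlinarith

/-- straight window of 3 cubes: squared diameter at least 12. -/
lemma straight_window (v w : Fin 4 → ℤ) (j : Fin 4)
    (hd : w j - v j = 2 ∨ w j - v j = -2) :
    ∃ x ∈ cubeAt 4 v, ∃ y ∈ cubeAt 4 w, (12:ℝ) ≤ dist x y ^ 2 := by
  obtain ⟨x, hx, y, hy, he⟩ := dist_sq_cubes v w
  refine ⟨x, hx, y, hy, ?_⟩
  rw [he]
  have h9 : (((|w j - v j| : ℤ) : ℝ) + 1)^2 = 9 := by
    rcases hd with h | h <;> rw [h] <;> norm_num
  have := sum_ge_one4 _ (one_le_absterm v w) j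
  rw [h9] at this
  linarith

/-- s-shaped window of 4 cubes: squared diameter at least 15. -/
lemma sshape_window (v w : Fin 4 → ℤ) (j k : Fin 4) (hjk : j ≠ k)
    (hdj : w j - v j = 2 ∨ w j - v j = -2)
    (hdk : w k - v k = 1 ∨ w k - v k = -1) :
    ∃ x ∈ cubeAt 4 v, ∃ y ∈ cubeAt 4 w, (15:ℝ) ≤ dist x y ^ 2 := by
  obtain ⟨x, hx, y, hy, he⟩ := dist_sq_cubes v w
  refine ⟨x, hx, y, hy, ?_⟩
  rw [he]
  have h9 : (((|w j - v j| : ℤ) : ℝ) + 1)^2 = 9 := by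
    rcases hdj with h | h <;> rw [h] <;> norm_num
  have h4 : (((|w k - v k| : ℤ) : ℝ) + 1)^2 = 4 := by
    rcases hdk with h | h <;> rw [h] <;> norm_num
  have := sum_ge_two4 _ (one_le_absterm v w) j k hjk
  rw [h9, h4] at this
  linarith

/-- spiral window of 4 cubes: squared diameter at least 13. -/
lemma spiral_window (v w : Fin 4 → ℤ) (j k l : Fin 4)
    (hjk : j ≠ k) (hjl : j ≠ l) (hkl : k ≠ l)
    (hdj : w j - v j = 1 ∨ w j - v j = -1)
    (hdk : w k - v k = 1 ∨ w k - v k = -1)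
    (hdl : w l - v l = 1 ∨ w l - v l = -1) :
    ∃ x ∈ cubeAt 4 v, ∃ y ∈ cubeAt 4 w, (13:ℝ) ≤ dist x y ^ 2 := by
  obtain ⟨x, hx, y, hy, he⟩ := dist_sq_cubes v w
  refine ⟨x, hx, y, hy, ?_⟩
  rw [he]
  have h4j : (((|w j - v j| : ℤ) : ℝ) + 1)^2 = 4 := by
    rcases hdj with h | h <;> rw [h] <;> norm_num
  have h4k : (((|w k - v k| : ℤ) : ℝ) + 1)^2 = 4 := by
    rcases hdk with h | h <;> rw [h] <;> norm_num
  have h4l : (((|w l - v l| : ℤ) : ℝ) + 1)^2 = 4 := by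
    rcases hdl with h | h <;> rw [h] <;> norm_num
  have := sum_ge_three4 _ (one_le_absterm v w) j k l hjk hjl hkl
  rw [h4j, h4k, h4l] at this
  linarith

/-- Main tool: a window with a large enough pointwise distance forces
the dilation to be at least `169/4`. -/
lemma ratio_le_dilation (n : ℕ) (c : ℕ → Fin 4 → ℤ)
    (hBdd : BddAbove {w : ℝ | ∃ i j : ℕ, i ≤ j ∧ j < n ∧
      w = Metric.diam (⋃ k ∈ Finset.Icc i j, cubeAt 4 (c k)) ^ 4 / ((j - i + 1 : ℕ) : ℝ)})
    (i j : ℕ) (hij : i ≤ j) (hjn : j < n)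
    (hUb : Bornology.IsBounded (⋃ k ∈ Finset.Icc i j, cubeAt 4 (c k)))
    (t : ℝ) (ht : 0 ≤ t)
    (hx : ∃ x ∈ cubeAt 4 (c i), ∃ y ∈ cubeAt 4 (c j), t ≤ dist x y ^ 2)
    (hgoal : 169 / 4 * ((j - i + 1 : ℕ) : ℝ) ≤ t ^ 2) :
    169 / 4 ≤ chainDilation 4 n c := by
  obtain ⟨x, hxm, y, hym, hd⟩ := hx
  set U := ⋃ k ∈ Finset.Icc i j, cubeAt 4 (c k) with hU
  have hxU : x ∈ U := Set.mem_iUnion₂.mpr ⟨i, Finset.mem_Icc.mpr ⟨le_refl i, hij⟩, hxm⟩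
  have hyU : y ∈ U := Set.mem_iUnion₂.mpr ⟨j, Finset.mem_Icc.mpr ⟨hij, le_refl j⟩, hym⟩
  have hdd : dist x y ≤ Metric.diam U := Metric.dist_le_diam_of_mem hUb hxU hyU
  have h2 : t ≤ Metric.diam U ^ 2 :=
    le_trans hd (pow_le_pow_left₀ dist_nonneg hdd 2)
  have h4 : t ^ 2 ≤ Metric.diam U ^ 4 := by
    calc t ^ 2 ≤ (Metric.diam U ^ 2) ^ 2 := pow_le_pow_left₀ ht h2 2
    _ = Metric.diam U ^ 4 := by ring
  have hmpos : (0 : ℝ) < ((j - i + 1 : ℕ) : ℝ) := by positivity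
  have hmem : Metric.diam U ^ 4 / ((j - i + 1 : ℕ) : ℝ) ∈
      {w : ℝ | ∃ i j : ℕ, i ≤ j ∧ j < n ∧
        w = Metric.diam (⋃ k ∈ Finset.Icc i j, cubeAt 4 (c k)) ^ 4 / ((j - i + 1 : ℕ) : ℝ)} :=
    ⟨i, j, hij, hjn, rfl⟩
  have hle : 169 / 4 ≤ Metric.diam U ^ 4 / ((j - i + 1 : ℕ) : ℝ) := by
    rw [le_div_iff₀ hmpos]
    nlinarith [hgoal, h4]
  exact le_trans hle (le_csSup hBdd hmem)

/-- Two consecutive steps along the same axis go the same way (else two corners repeat). -/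
lemma pair_straight (n : ℕ) (c : ℕ → Fin 4 → ℤ)
    (hinj : ∀ i j, i < n → j < n → c i = c j → i = j)
    (p : ℕ) (hp : p + 2 < n) (j : Fin 4)
    (hs1 : c (p+1) j - c p j = 1 ∨ c (p+1) j - c p j = -1)
    (ho1 : ∀ idx, idx ≠ j → c (p+1) idx = c p idx)
    (hs2 : c (p+2) j - c (p+1) j = 1 ∨ c (p+2) j - c (p+1) j = -1)
    (ho2 : ∀ idx, idx ≠ j → c (p+2) idx = c (p+1) idx) :
    c (p+2) j - c p j = 2 ∨ c (p+2) j - c p j = -2 := by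
  have hrep : ¬ c (p+2) = c p := by
    intro hcc
    have := hinj (p+2) p hp (by omega) hcc
    omega
  rcases hs1 with h1 | h1 <;> rcases hs2 with h2 | h2
  · left; omega
  · exfalso
    exact hrep (funext fun idx => by
      by_cases hidx : idx = j
      · subst hidx; omega
      · rw [ho2 idx hidx, ho1 idx hidx])
  · exfalso
    exact hrep (funext fun idx => by
      by_cases hidx : idx = j
      · subst hidx; omega
      · rw [ho2 idx hidx, ho1 idx hidx])
  · right; omega

/-- A 4D facet-continuous polycubic chain with cubic body `a + [0,s]⁴` and more
than one fraction has dilation at least `42.25 = 169/4`. -/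
theorem cubic_body_chain4d_dilation_ge (s n : ℕ) (c : ℕ → Fin 4 → ℤ)
    (a : Fin 4 → ℤ) (hn : n = s ^ 4) (h1 : 1 < n)
    (hchain : IsPolycubicChain 4 n c) (hfc : FacetContinuous 4 n c)
    (hbody : (⋃ k ∈ Finset.range n, cubeAt 4 (c k)) =
      {x : EuclideanSpace ℝ (Fin 4) | ∀ i, x i ∈ Icc ((a i : ℝ)) ((a i : ℝ) + s)}) :
    169 / 4 ≤ chainDilation 4 n c := by
  obtain ⟨hinj, -⟩ := hchain
  -- `n ≥ 16`
  have hn16 : 16 ≤ n := by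
    have hs : 2 ≤ s := by
      by_contra h
      push_neg at h
      interval_cases s <;> omega
    calc (16:ℕ) = 2^4 := by norm_num
    _ ≤ s^4 := Nat.pow_le_pow_left hs 4
    _ = n := hn.symm
  -- the body is bounded
  set B := {x : EuclideanSpace ℝ (Fin 4) | ∀ i, x i ∈ Icc ((a i : ℝ)) ((a i : ℝ) + s)} with hB
  have hBbd : Bornology.IsBounded B := by
    rw [Metric.isBounded_iff]
    refine ⟨2 * s, fun {x} hx {y} hy => ?_⟩
    have hterm : ∀ i : Fin 4, dist (x i) (y i) ^ 2 ≤ (s:ℝ)^2 := by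
      intro i
      have h1 := hx i
      have h2 := hy i
      simp only [Set.mem_Icc] at h1 h2
      rw [Real.dist_eq, sq_abs]
      nlinarith [h1.1, h1.2, h2.1, h2.2]
    calc dist x y = Real.sqrt (∑ i, dist (x i) (y i)^2) := EuclideanSpace.dist_eq x y
    _ ≤ Real.sqrt ((2*(s:ℝ))^2) := by
        apply Real.sqrt_le_sqrt
        calc ∑ i : Fin 4, dist (x i) (y i)^2 ≤ ∑ _i : Fin 4, (s:ℝ)^2 :=
              Finset.sum_le_sum (fun i _ => hterm i)
        _ = 4 * (s:ℝ)^2 := by simp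
        _ ≤ (2*(s:ℝ))^2 := by nlinarith
    _ = 2 * s := Real.sqrt_sq (by positivity)
  -- windows are inside the body
  have hsubU : ∀ i j : ℕ, j < n → (⋃ k ∈ Finset.Icc i j, cubeAt 4 (c k)) ⊆ B := by
    intro i j hj
    refine Set.iUnion₂_subset fun k hk => ?_
    have hkn : k < n := lt_of_le_of_lt (Finset.mem_Icc.mp hk).2 hj
    rw [← hbody]
    intro x hx
    exact Set.mem_iUnion₂.mpr ⟨k, Finset.mem_range.mpr hkn, hx⟩
  -- the dilation set is bounded above
  have hBdd : BddAbove {w : ℝ | ∃ i j : ℕ, i ≤ j ∧ j < n ∧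
      w = Metric.diam (⋃ k ∈ Finset.Icc i j, cubeAt 4 (c k)) ^ 4 / ((j - i + 1 : ℕ) : ℝ)} := by
    refine ⟨Metric.diam B ^ 4, ?_⟩
    rintro w ⟨i, j, hij, hjn, rfl⟩
    have hd1 : Metric.diam (⋃ k ∈ Finset.Icc i j, cubeAt 4 (c k)) ≤ Metric.diam B :=
      Metric.diam_mono (hsubU i j hjn) hBbd
    have hd4 : Metric.diam (⋃ k ∈ Finset.Icc i j, cubeAt 4 (c k)) ^ 4 ≤ Metric.diam B ^ 4 :=
      pow_le_pow_left₀ Metric.diam_nonneg hd1 4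
    have hm1 : (1:ℝ) ≤ ((j - i + 1 : ℕ) : ℝ) := by exact_mod_cast Nat.le_add_left 1 (j - i)
    calc Metric.diam (⋃ k ∈ Finset.Icc i j, cubeAt 4 (c k)) ^ 4 / ((j - i + 1 : ℕ) : ℝ)
        ≤ Metric.diam (⋃ k ∈ Finset.Icc i j, cubeAt 4 (c k)) ^ 4 :=
          div_le_self (by positivity) hm1
    _ ≤ Metric.diam B ^ 4 := hd4
  -- extract the first four steps
  obtain ⟨j0, hs0, ho0⟩ := hfc 0 (by omega)
  obtain ⟨j1, hs1, ho1⟩ := hfc 1 (by omega)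
  obtain ⟨j2, hs2, ho2⟩ := hfc 2 (by omega)
  obtain ⟨j3, hs3, ho3⟩ := hfc 3 (by omega)
  norm_num at hs0 ho0 hs1 ho1 hs2 ho2 hs3 ho3
  -- Case: second step along the same axis as first
  by_cases e10 : j1 = j0
  · rw [e10] at hs1 ho1
    have hd := pair_straight n c hinj 0 (by omega) j0 hs0 ho0 hs1 ho1
    refine ratio_le_dilation n c hBdd 0 2 (by omega) (by omega)
      (hBbd.subset (hsubU 0 2 (by omega))) 12 (by norm_num)
      (straight_window _ _ j0 hd) (by norm_num)
  by_cases e21 : j2 = j1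
  · rw [e21] at hs2 ho2
    have hd := pair_straight n c hinj 1 (by omega) j1 hs1 ho1 hs2 ho2
    refine ratio_le_dilation n c hBdd 1 3 (by omega) (by omega)
      (hBbd.subset (hsubU 1 3 (by omega))) 12 (by norm_num)
      (straight_window _ _ j1 hd) (by norm_num)
  by_cases e32 : j3 = j2
  · rw [e32] at hs3 ho3
    have hd := pair_straight n c hinj 2 (by omega) j2 hs2 ho2 hs3 ho3
    refine ratio_le_dilation n c hBdd 2 4 (by omega) (by omega)
      (hBbd.subset (hsubU 2 4 (by omega))) 12 (by norm_num)
      (straight_window _ _ j2 hd) (by norm_num)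
  -- now consecutive axes are distinct
  by_cases e20 : j2 = j0
  · rw [e20] at hs2 ho2
    by_cases hU : c 3 j0 = c 0 j0
    · -- step 2 undoes step 0 at axis j0; analyze step 3
      by_cases e31 : j3 = j1
      · rw [e31] at hs3 ho3
        by_cases hU2 : c 4 j1 = c 1 j1
        · -- all corners repeat: c 4 = c 0, contradiction with injectivity
          exfalso
          have hcc : c 4 = c 0 := funext fun idx => by
            by_cases h0 : idx = j0
            · rw [h0]
              have a1 := ho1 j0 (Ne.symm e10)
              have a3 := ho3 j0 (Ne.symm e10)
              omega
            · by_cases h1 : idx = j1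
              · rw [h1]
                have a0 := ho0 j1 e10
                omega
              · have a0 := ho0 idx h0
                have a1 := ho1 idx h1
                have a2 := ho2 idx h0
                have a3 := ho3 idx h1
                omega
          have := hinj 4 0 (by omega) (by omega) hcc
          omega
        · -- s-shape on window [1,4] along axes j1 and j0
          have hdj1 : c 4 j1 - c 1 j1 = 2 ∨ c 4 j1 - c 1 j1 = -2 := by
            have a2 := ho2 j1 e10
            omega
          have hdj0 : c 4 j0 - c 1 j0 = 1 ∨ c 4 j0 - c 1 j0 = -1 := by
            have a1 := ho1 j0 (Ne.symm e10)
            have a3 := ho3 j0 (Ne.symm e10)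
            omega
          refine ratio_le_dilation n c hBdd 1 4 (by omega) (by omega)
            (hBbd.subset (hsubU 1 4 (by omega))) 15 (by norm_num)
            (sshape_window _ _ j1 j0 e10 hdj1 hdj0) (by norm_num)
      · -- spiral on window [1,4] along axes j1, j0, j3
        have h30 : j3 ≠ j0 := by
          intro h
          exact e32 (h.trans e20.symm)
        have hdj1 : c 4 j1 - c 1 j1 = 1 ∨ c 4 j1 - c 1 j1 = -1 := by
          have a2 := ho2 j1 e10
          have a3 := ho3 j1 (Ne.symm e31)
          omega
        have hdj0 : c 4 j0 - c 1 j0 = 1 ∨ c 4 j0 - c 1 j0 = -1 := by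
          have a1 := ho1 j0 (Ne.symm e10)
          have a3 := ho3 j0 (Ne.symm h30)
          omega
        have hdj3 : c 4 j3 - c 1 j3 = 1 ∨ c 4 j3 - c 1 j3 = -1 := by
          have a1 := ho1 j3 e31
          have a2 := ho2 j3 h30
          omega
        refine ratio_le_dilation n c hBdd 1 4 (by omega) (by omega)
          (hBbd.subset (hsubU 1 4 (by omega))) 13 (by norm_num)
          (spiral_window _ _ j1 j0 j3 e10 (Ne.symm e31) (Ne.symm h30) hdj1 hdj0 hdj3)
          (by norm_num)
    · -- s-shape on window [0,3] along axes j0 and j1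
      have hdj0 : c 3 j0 - c 0 j0 = 2 ∨ c 3 j0 - c 0 j0 = -2 := by
        have a1 := ho1 j0 (Ne.symm e10)
        omega
      have hdj1 : c 3 j1 - c 0 j1 = 1 ∨ c 3 j1 - c 0 j1 = -1 := by
        have a0 := ho0 j1 e10
        have a2 := ho2 j1 e10
        omega
      refine ratio_le_dilation n c hBdd 0 3 (by omega) (by omega)
        (hBbd.subset (hsubU 0 3 (by omega))) 15 (by norm_num)
        (sshape_window _ _ j0 j1 (Ne.symm e10) hdj0 hdj1) (by norm_num)
  · -- spiral on window [0,3] along axes j0, j1, j2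
    have hdj0 : c 3 j0 - c 0 j0 = 1 ∨ c 3 j0 - c 0 j0 = -1 := by
      have a1 := ho1 j0 (Ne.symm e10)
      have a2 := ho2 j0 (Ne.symm e20)
      omega
    have hdj1 : c 3 j1 - c 0 j1 = 1 ∨ c 3 j1 - c 0 j1 = -1 := by
      have a0 := ho0 j1 e10
      have a2 := ho2 j1 (Ne.symm e21)
      omega
    have hdj2 : c 3 j2 - c 0 j2 = 1 ∨ c 3 j2 - c 0 j2 = -1 := by
      have a0 := ho0 j2 e20
      have a1 := ho1 j2 e21
      omega
    refine ratio_le_dilation n c hBdd 0 3 (by omega) (by omega)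
      (hBbd.subset (hsubU 0 3 (by omega))) 13 (by norm_num)
      (spiral_window _ _ j0 j1 j2 (Ne.symm e10) (Ne.symm e20) (Ne.symm e21) hdj0 hdj1 hdj2)
      (by norm_num)
end

section
/- If the corners c₁, c₂, c₃, c₄ of a 4-dimensional facet-continuous polycubic chain Q₁, Q₂, Q₃, Q₄ of length 4 do not lie in a common 2-dimensional affine plane (i.e. the chain is not coplanar), then the Euclidean diameter of its body satisfies diam(Q₁ ∪ Q₂ ∪ Q₃ ∪ Q₄) ≥ √13, and hence the dilation of the chain is at least 169/4. -/
open Set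

def realCorner (d : ℕ) (v : Fin d → ℤ) : EuclideanSpace ℝ (Fin d) :=
  WithLp.toLp 2 (fun i => (v i : ℝ))

lemma key_sum (j0 j1 j2 : Fin 4) (e0 e1 e2 : ℤ)
    (h0 : e0 = 1 ∨ e0 = -1) (h1 : e1 = 1 ∨ e1 = -1) (h2 : e2 = 1 ∨ e2 = -1)
    (d01 : j0 ≠ j1) (d02 : j0 ≠ j2) (d12 : j1 ≠ j2) :
    ∑ i : Fin 4, ((|(if i = j0 then e0 else 0) + (if i = j1 then e1 else 0) +
      (if i = j2 then e2 else 0)| + 1) ^ 2) = 13 := by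
  rcases h0 with rfl | rfl <;> rcases h1 with rfl | rfl <;> rcases h2 with rfl | rfl <;>
    (revert j0 j1 j2; decide)

lemma rank_pair_le (a b : EuclideanSpace ℝ (Fin 4)) :
    Module.finrank ℝ (Submodule.span ℝ ({a, b} : Set (EuclideanSpace ℝ (Fin 4)))) ≤ 2 := by
  classical
  refine (finrank_span_le_card _).trans ?_
  refine (Finset.card_le_card (fun x hx => ?_)).trans
    ((Finset.card_insert_le a {b}).trans (by simp))
  rw [Set.mem_toFinset] at hx
  simpa using hx

lemma cube_bounded (v : Fin 4 → ℤ) : Bornology.IsBounded (cubeAt 4 v) := by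
  refine (Metric.isBounded_closedBall (x := realCorner 4 v) (r := 2)).subset fun x hx => ?_
  rw [Metric.mem_closedBall, EuclideanSpace.dist_eq]
  have hsum : ∑ i, dist (x i) (realCorner 4 v i) ^ 2 ≤ 4 := by
    have h1 : ∀ i : Fin 4, dist (x i) (realCorner 4 v i) ^ 2 ≤ 1 := by
      intro i
      obtain ⟨ha, hb⟩ := hx i
      have hd : dist (x i) (realCorner 4 v i) ≤ 1 := by
        rw [Real.dist_eq, abs_le]
        constructor <;> simp [realCorner] at * <;> linarith
      calc dist (x i) (realCorner 4 v i) ^ 2 ≤ 1 ^ 2 :=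
            pow_le_pow_left₀ dist_nonneg hd 2
        _ = 1 := one_pow 2
    calc ∑ i, dist (x i) (realCorner 4 v i) ^ 2 ≤ ∑ _i : Fin 4, (1 : ℝ) :=
          Finset.sum_le_sum fun i _ => h1 i
      _ = 4 := by simp
  calc Real.sqrt (∑ i, dist (x i) (realCorner 4 v i) ^ 2) ≤ Real.sqrt 4 :=
        Real.sqrt_le_sqrt hsum
    _ = 2 := by rw [show (4:ℝ) = 2 ^ 2 by norm_num, Real.sqrt_sq (by norm_num)]

/-- If the corners of a 4D facet-continuous polycubic chain of length 4 do not
lie in a common 2-dimensional affine plane (i.e. the linear span of the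
difference vectors has rank greater than 2), then the diameter of its body is
at least `√13`, and hence its dilation is at least `169/4`. -/
theorem chain4d_four_noncoplanar_diam_ge (c : ℕ → Fin 4 → ℤ)
    (hchain : IsPolycubicChain 4 4 c) (hfc : FacetContinuous 4 4 c)
    (hnoncop : ¬ Module.finrank ℝ
      (Submodule.span ℝ
        ({realCorner 4 (c 1) - realCorner 4 (c 0),
          realCorner 4 (c 2) - realCorner 4 (c 0),
          realCorner 4 (c 3) - realCorner 4 (c 0)} :
            Set (EuclideanSpace ℝ (Fin 4)))) ≤ 2) :
    Real.sqrt 13 ≤ Metric.diam (⋃ k ∈ Finset.range 4, cubeAt 4 (c k)) ∧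
      169 / 4 ≤ chainDilation 4 4 c := by
  obtain ⟨j0, hs0, ho0⟩ := hfc 0 (by norm_num)
  obtain ⟨j1, hs1, ho1⟩ := hfc 1 (by norm_num)
  obtain ⟨j2, hs2, ho2⟩ := hfc 2 (by norm_num)
  -- step formulas
  have hst0 : ∀ i, c 1 i - c 0 i = if i = j0 then c 1 j0 - c 0 j0 else 0 := by
    intro i; by_cases h : i = j0
    · subst h; simp
    · simp [h, sub_eq_zero.mpr (ho0 i h)]
  have hst1 : ∀ i, c 2 i - c 1 i = if i = j1 then c 2 j1 - c 1 j1 else 0 := by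
    intro i; by_cases h : i = j1
    · subst h; simp
    · simp [h, sub_eq_zero.mpr (ho1 i h)]
  have hst2 : ∀ i, c 3 i - c 2 i = if i = j2 then c 3 j2 - c 2 j2 else 0 := by
    intro i; by_cases h : i = j2
    · subst h; simp
    · simp [h, sub_eq_zero.mpr (ho2 i h)]
  have hΔ1 : ∀ i, c 1 i - c 0 i = (if i = j0 then c 1 j0 - c 0 j0 else 0) := hst0
  have hΔ2 : ∀ i, c 2 i - c 0 i =
      (if i = j0 then c 1 j0 - c 0 j0 else 0) + (if i = j1 then c 2 j1 - c 1 j1 else 0) := by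
    intro i; rw [← hst0 i, ← hst1 i]; ring
  have hΔ3 : ∀ i, c 3 i - c 0 i =
      (if i = j0 then c 1 j0 - c 0 j0 else 0) + (if i = j1 then c 2 j1 - c 1 j1 else 0) +
      (if i = j2 then c 3 j2 - c 2 j2 else 0) := by
    intro i; rw [← hst0 i, ← hst1 i, ← hst2 i]; ring
  -- the basis vectors used
  set E : Fin 4 → EuclideanSpace ℝ (Fin 4) := fun j => EuclideanSpace.single j (1 : ℝ) with hE
  have hd1 : realCorner 4 (c 1) - realCorner 4 (c 0) =
      ((c 1 j0 - c 0 j0 : ℤ) : ℝ) • E j0 := by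
    ext i
    have h' := congrArg (fun z : ℤ => (z : ℝ)) (hΔ1 i)
    push_cast at h'
    simp only [hE, PiLp.sub_apply, PiLp.smul_apply, EuclideanSpace.single_apply,
      smul_eq_mul, realCorner]
    by_cases h0 : i = j0 <;> simp [h0] at h' ⊢ <;> push_cast <;> linarith
  have hd2 : realCorner 4 (c 2) - realCorner 4 (c 0) =
      ((c 1 j0 - c 0 j0 : ℤ) : ℝ) • E j0 + ((c 2 j1 - c 1 j1 : ℤ) : ℝ) • E j1 := by
    ext i
    have h' := congrArg (fun z : ℤ => (z : ℝ)) (hΔ2 i)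
    push_cast at h'
    simp only [hE, PiLp.sub_apply, PiLp.add_apply, PiLp.smul_apply,
      EuclideanSpace.single_apply, smul_eq_mul, realCorner]
    by_cases h0 : i = j0 <;> by_cases h1 : i = j1 <;>
      simp [h0, h1] at h' ⊢ <;> push_cast <;> linarith
  have hd3 : realCorner 4 (c 3) - realCorner 4 (c 0) =
      ((c 1 j0 - c 0 j0 : ℤ) : ℝ) • E j0 + ((c 2 j1 - c 1 j1 : ℤ) : ℝ) • E j1 +
      ((c 3 j2 - c 2 j2 : ℤ) : ℝ) • E j2 := by
    ext i
    have h' := congrArg (fun z : ℤ => (z : ℝ)) (hΔ3 i)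
    push_cast at h'
    simp only [hE, PiLp.sub_apply, PiLp.add_apply, PiLp.smul_apply,
      EuclideanSpace.single_apply, smul_eq_mul, realCorner]
    by_cases h0 : i = j0 <;> by_cases h1 : i = j1 <;> by_cases h2 : i = j2 <;>
      simp [h0, h1, h2] at h' ⊢ <;> push_cast <;> linarith
  -- span inclusion
  have hspan : Submodule.span ℝ
      ({realCorner 4 (c 1) - realCorner 4 (c 0),
        realCorner 4 (c 2) - realCorner 4 (c 0),
        realCorner 4 (c 3) - realCorner 4 (c 0)} : Set (EuclideanSpace ℝ (Fin 4))) ≤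
      Submodule.span ℝ ({E j0, E j1, E j2} : Set (EuclideanSpace ℝ (Fin 4))) := by
    rw [Submodule.span_le]
    have m0 : E j0 ∈ Submodule.span ℝ ({E j0, E j1, E j2} : Set (EuclideanSpace ℝ (Fin 4))) :=
      Submodule.subset_span (by simp)
    have m1 : E j1 ∈ Submodule.span ℝ ({E j0, E j1, E j2} : Set (EuclideanSpace ℝ (Fin 4))) :=
      Submodule.subset_span (by simp)
    have m2 : E j2 ∈ Submodule.span ℝ ({E j0, E j1, E j2} : Set (EuclideanSpace ℝ (Fin 4))) :=
      Submodule.subset_span (by simp)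
    rintro v hv
    simp only [Set.mem_insert_iff, Set.mem_singleton_iff] at hv
    rcases hv with rfl | rfl | rfl
    · rw [hd1]; exact Submodule.smul_mem _ _ m0
    · rw [hd2]; exact add_mem (Submodule.smul_mem _ _ m0) (Submodule.smul_mem _ _ m1)
    · rw [hd3]; exact add_mem (add_mem (Submodule.smul_mem _ _ m0)
        (Submodule.smul_mem _ _ m1)) (Submodule.smul_mem _ _ m2)
  -- distinctness of directions
  have hdir : ∀ (a b : EuclideanSpace ℝ (Fin 4)),
      ({E j0, E j1, E j2} : Set (EuclideanSpace ℝ (Fin 4))) = {a, b} → False := by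
    intro a b hab
    apply hnoncop
    calc Module.finrank ℝ (Submodule.span ℝ _) ≤
        Module.finrank ℝ (Submodule.span ℝ ({a, b} : Set (EuclideanSpace ℝ (Fin 4)))) :=
          Submodule.finrank_mono (by rw [← hab]; exact hspan)
      _ ≤ 2 := rank_pair_le a b
  have hne01 : j0 ≠ j1 := by
    intro h
    exact hdir (E j1) (E j2) (by rw [h, Set.insert_idem])
  have hne02 : j0 ≠ j2 := by
    intro h
    refine hdir (E j2) (E j1) ?_
    rw [h]; ext v; simp [Set.mem_insert_iff]; try tauto
  have hne12 : j1 ≠ j2 := by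
    intro h
    refine hdir (E j0) (E j2) ?_
    rw [h]; ext v; simp [Set.mem_insert_iff]; try tauto
  -- the integral sum
  have hZ : ∑ i : Fin 4, ((|c 3 i - c 0 i| + 1) ^ 2) = 13 := by
    rw [← key_sum j0 j1 j2 _ _ _ hs0 hs1 hs2 hne01 hne02 hne12]
    exact Finset.sum_congr rfl fun i _ => by rw [hΔ3 i]
  -- the two far points
  set x : EuclideanSpace ℝ (Fin 4) :=
    WithLp.toLp 2 fun i => if c 0 i ≤ c 3 i then (c 0 i : ℝ) else (c 0 i : ℝ) + 1 with hxdef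
  set y : EuclideanSpace ℝ (Fin 4) :=
    WithLp.toLp 2 fun i => if c 0 i ≤ c 3 i then (c 3 i : ℝ) + 1 else (c 3 i : ℝ) with hydef
  have hxmem : x ∈ cubeAt 4 (c 0) := by
    intro i
    by_cases h : c 0 i ≤ c 3 i <;> simp [hxdef, h, Set.mem_Icc] <;> norm_num
  have hymem : y ∈ cubeAt 4 (c 3) := by
    intro i
    by_cases h : c 0 i ≤ c 3 i <;> simp [hydef, h, Set.mem_Icc] <;> norm_num
  have hcoord : ∀ i : Fin 4, dist (x i) (y i) ^ 2 = (((|c 3 i - c 0 i| + 1) ^ 2 : ℤ) : ℝ) := by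
    intro i
    by_cases h : c 0 i ≤ c 3 i
    · have habs : |c 3 i - c 0 i| = c 3 i - c 0 i := abs_of_nonneg (by linarith)
      rw [habs, hxdef, hydef]
      simp only [PiLp.toLp_apply, h, if_true]
      rw [Real.dist_eq, sq_abs]
      push_cast
      ring
    · have habs : |c 3 i - c 0 i| = -(c 3 i - c 0 i) := abs_of_neg (by omega)
      rw [habs, hxdef, hydef]
      simp only [PiLp.toLp_apply, h, if_false]
      rw [Real.dist_eq, sq_abs]
      push_cast
      ring
  have hsum13 : ∑ i, dist (x i) (y i) ^ 2 = 13 := by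
    rw [Finset.sum_congr rfl fun i _ => hcoord i, ← Int.cast_sum, hZ]
    norm_num
  have hdxy : dist x y = Real.sqrt 13 := by
    rw [EuclideanSpace.dist_eq, hsum13]
  -- boundedness of the body
  have hbody : Bornology.IsBounded (⋃ k ∈ Finset.range 4, cubeAt 4 (c k)) := by
    refine (Bornology.isBounded_biUnion (Finset.range 4).finite_toSet).2 fun k _ => ?_
    exact cube_bounded (c k)
  have hxbody : x ∈ ⋃ k ∈ Finset.range 4, cubeAt 4 (c k) :=
    Set.mem_biUnion (by simp : (0:ℕ) ∈ Finset.range 4) hxmem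
  have hybody : y ∈ ⋃ k ∈ Finset.range 4, cubeAt 4 (c k) :=
    Set.mem_biUnion (by simp : (3:ℕ) ∈ Finset.range 4) hymem
  have hdiam : Real.sqrt 13 ≤ Metric.diam (⋃ k ∈ Finset.range 4, cubeAt 4 (c k)) := by
    rw [← hdxy]
    exact Metric.dist_le_diam_of_mem hbody hxbody hybody
  refine ⟨hdiam, ?_⟩
  -- dilation part
  have hIcc : (Finset.Icc 0 3 : Finset ℕ) = Finset.range 4 := rfl
  set D := Metric.diam (⋃ k ∈ Finset.range 4, cubeAt 4 (c k)) with hD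
  have hmem : D ^ 4 / ((3 - 0 + 1 : ℕ) : ℝ) ∈
      {w : ℝ | ∃ i j : ℕ, i ≤ j ∧ j < 4 ∧
        w = Metric.diam (⋃ k ∈ Finset.Icc i j, cubeAt 4 (c k)) ^ 4 / ((j - i + 1 : ℕ) : ℝ)} :=
    ⟨0, 3, by norm_num, by norm_num, by rw [hIcc]⟩
  have hbdd : BddAbove {w : ℝ | ∃ i j : ℕ, i ≤ j ∧ j < 4 ∧
      w = Metric.diam (⋃ k ∈ Finset.Icc i j, cubeAt 4 (c k)) ^ 4 / ((j - i + 1 : ℕ) : ℝ)} := by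
    refine BddAbove.mono ?_ (((Set.finite_Iio 4).prod (Set.finite_Iio 4)).image
      (fun p : ℕ × ℕ =>
        Metric.diam (⋃ k ∈ Finset.Icc p.1 p.2, cubeAt 4 (c k)) ^ 4 /
          ((p.2 - p.1 + 1 : ℕ) : ℝ))).bddAbove
    rintro w ⟨i, j, hij, hj, rfl⟩
    exact ⟨(i, j), ⟨lt_of_le_of_lt hij hj, hj⟩, rfl⟩
  have hD0 : 13 ≤ D ^ 2 := by
    have h13 : (Real.sqrt 13) ^ 2 = 13 := Real.sq_sqrt (by norm_num)
    calc (13 : ℝ) = (Real.sqrt 13) ^ 2 := h13.symm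
      _ ≤ D ^ 2 := pow_le_pow_left₀ (Real.sqrt_nonneg 13) hdiam 2
  have hD4 : 169 ≤ D ^ 4 := by
    calc (169 : ℝ) = 13 ^ 2 := by norm_num
      _ ≤ (D ^ 2) ^ 2 := pow_le_pow_left₀ (by norm_num) hD0 2
      _ = D ^ 4 := by ring
  have hw : 169 / 4 ≤ D ^ 4 / ((3 - 0 + 1 : ℕ) : ℝ) := by
    norm_num
    linarith
  exact hw.trans (le_csSup hbdd hmem)
end
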